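/- In the meromorphic setting, suppose that every c_n is not identically zero and that γ_n → +∞ as n → ∞. Then for every sufficiently large integer n there exist r > 0 and a holomorphic, nowhere-vanishing function h on the disk {|t| < r} such that for all t with 0 < |t| < r one has G⁺(a(t), b(t)) + (γ_n/3^n)·log|t| = log|h(t)|, where G⁺(a,b) := lim_{m→∞} 3^{−m}·log⁺|f_{a,b}^m(a)|. (In particular, G⁺(a(t),b(t)) + (γ_n/3^n)·log|t| extends to a harmonic function in a neighbourhood of 0.) -/

import Mathlib

open Filter Metric

/-- `g` is meromorphic at `0` with order of vanishing `d ∈ ℤ` (negative for a pole):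
near `0` (but off `0`) we have `g t = t ^ d · u t` with `u` analytic and nonvanishing
at `0`. -/
def HasOrdAtZero (g : ℂ → ℂ) (d : ℤ) : Prop :=
  ∃ u : ℂ → ℂ, AnalyticAt ℂ u 0 ∧ u 0 ≠ 0 ∧
    ∀ᶠ t in nhdsWithin (0 : ℂ) {0}ᶜ, g t = t ^ d * u t

/-- Meromorphic at `0`: some order, or identically zero near `0`. -/
def MeroAtZero (g : ℂ → ℂ) : Prop :=
  (∃ d : ℤ, HasOrdAtZero g d) ∨ ∀ᶠ t in nhdsWithin (0 : ℂ) {0}ᶜ, g t = 0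

/-- The cubic polynomial `f_{a,b}(z) = z³ - 3a²z + b`. -/
noncomputable def fab (a b : ℂ) : ℂ → ℂ := fun z => z ^ 3 - 3 * a ^ 2 * z + b

lemma ev_punct_iff {p : ℂ → Prop} :
    (∀ᶠ t in nhdsWithin (0:ℂ) {0}ᶜ, p t) ↔
    ∃ δ > 0, ∀ t : ℂ, 0 < ‖t‖ → ‖t‖ < δ → p t := by
  rw [eventually_nhdsWithin_iff, Metric.eventually_nhds_iff]
  constructor
  · rintro ⟨δ, hδ, H⟩
    refine ⟨δ, hδ, fun t h0 hd => H ?_ ?_⟩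
    · simpa [Complex.dist_eq] using hd
    · simpa using (norm_pos_iff.1 h0)
  · rintro ⟨δ, hδ, H⟩
    refine ⟨δ, hδ, fun {t} hd ht => H t ?_ ?_⟩
    · exact norm_pos_iff.2 (by simpa using ht)
    · simpa [Complex.dist_eq] using hd

lemma tendsto_zpow_punct {k : ℤ} (hk : 0 < k) :
    Tendsto (fun t : ℂ => t ^ k) (nhdsWithin 0 {0}ᶜ) (nhds 0) := by
  have he : (fun t : ℂ => t ^ k) = fun t => t ^ k.toNat := by
    funext t; rw [← zpow_natCast, Int.toNat_of_nonneg hk.le]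
  rw [he]
  have h2 := (continuous_pow (M := ℂ) k.toNat).tendsto 0
  rw [zero_pow (by omega : k.toNat ≠ 0)] at h2
  exact h2.mono_left nhdsWithin_le_nhds

lemma zpow_order_zero {k : ℤ} {φ : ℂ → ℂ} (hφ : ContinuousAt φ 0)
    (hφ0 : φ 0 ≠ 0) (h : ∀ᶠ t in nhdsWithin (0:ℂ) {0}ᶜ, t ^ k = φ t) : k = 0 := by
  have hφt : Tendsto φ (nhdsWithin (0:ℂ) {0}ᶜ) (nhds (φ 0)) :=
    hφ.tendsto.mono_left nhdsWithin_le_nhds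
  rcases lt_trichotomy k 0 with hk | hk | hk
  · exfalso
    have h1 : ∀ᶠ t in nhdsWithin (0:ℂ) {0}ᶜ, t ^ (-k) * φ t = 1 := by
      filter_upwards [h, self_mem_nhdsWithin] with t ht ht0
      have htne : t ≠ 0 := by simpa using ht0
      rw [← ht, ← zpow_add₀ htne]
      simp
    have h2 : Tendsto (fun t : ℂ => t ^ (-k) * φ t) (nhdsWithin (0:ℂ) {0}ᶜ)
        (nhds (0 * φ 0)) := (tendsto_zpow_punct (by omega)).mul hφt
    have h3 : Tendsto (fun _ : ℂ => (1:ℂ)) (nhdsWithin (0:ℂ) {0}ᶜ) (nhds (0 * φ 0)) :=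
      h2.congr' h1
    have := tendsto_nhds_unique h3 tendsto_const_nhds
    simp at this
  · exact hk
  · exfalso
    have h2 : Tendsto φ (nhdsWithin (0:ℂ) {0}ᶜ) (nhds 0) :=
      (tendsto_zpow_punct hk).congr' h
    exact hφ0 (tendsto_nhds_unique hφt h2)

lemma HasOrdAtZero.unique {g : ℂ → ℂ} {d₁ d₂ : ℤ} (h₁ : HasOrdAtZero g d₁)
    (h₂ : HasOrdAtZero g d₂) : d₁ = d₂ := by
  obtain ⟨u₁, hu₁, hu₁0, he₁⟩ := h₁
  obtain ⟨u₂, hu₂, hu₂0, he₂⟩ := h₂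
  have hcont : ContinuousAt (fun t => u₂ t / u₁ t) 0 :=
    hu₂.continuousAt.div hu₁.continuousAt hu₁0
  have hne : ∀ᶠ t in nhdsWithin (0:ℂ) {0}ᶜ, u₁ t ≠ 0 :=
    (hu₁.continuousAt.eventually_ne hu₁0).filter_mono nhdsWithin_le_nhds
  have hev : ∀ᶠ t in nhdsWithin (0:ℂ) {0}ᶜ, t ^ (d₁ - d₂) = u₂ t / u₁ t := by
    filter_upwards [he₁, he₂, hne, self_mem_nhdsWithin] with t ht1 ht2 htu ht0
    have htne : t ≠ 0 := by simpa using ht0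
    have key : t ^ d₁ * u₁ t = t ^ d₂ * u₂ t := by rw [← ht1, ht2]
    rw [eq_div_iff htu, zpow_sub₀ htne, div_mul_eq_mul_div, div_eq_iff (zpow_ne_zero _ htne)]
    linear_combination key
  have := zpow_order_zero hcont (div_ne_zero hu₂0 hu₁0) hev
  omega

lemma HasOrdAtZero.bounds {g : ℂ → ℂ} {d : ℤ} (h : HasOrdAtZero g d) :
    ∃ C₁ C₂ : ℝ, 0 < C₁ ∧ 0 < C₂ ∧ ∀ᶠ t in nhdsWithin (0:ℂ) {0}ᶜ,
      C₁ * ‖t‖ ^ d ≤ ‖g t‖ ∧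
      ‖g t‖ ≤ C₂ * ‖t‖ ^ d := by
  obtain ⟨u, hu, hu0, he⟩ := h
  have habs : 0 < ‖u 0‖ := by simpa using hu0
  have hev : ∀ᶠ t in nhdsWithin (0:ℂ) {0}ᶜ,
      ‖u t - u 0‖ < ‖u 0‖ / 2 := by
    refine Filter.Eventually.filter_mono nhdsWithin_le_nhds ?_
    have hc : ContinuousAt (fun t => ‖u t - u 0‖) 0 :=
      (continuous_norm.continuousAt).comp (hu.continuousAt.sub continuousAt_const)
    have h2 := hc.eventually_lt (continuousAt_const (y := ‖u 0‖ / 2)) (by simp [habs])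
    simpa using h2
  refine ⟨‖u 0‖ / 2, ‖u 0‖ + ‖u 0‖ / 2,
    by positivity, by positivity, ?_⟩
  filter_upwards [he, hev] with t ht hev'
  have hd := abs_norm_sub_norm_le (u t) (u 0)
  have hd2 := abs_le.1 (hd.trans hev'.le)
  have h1 : ‖u 0‖ / 2 ≤ ‖u t‖ := by linarith [hd2.1]
  have h2 : ‖u t‖ ≤ ‖u 0‖ + ‖u 0‖ / 2 := by
    linarith [hd2.2]
  have habst : ‖g t‖ = ‖t‖ ^ d * ‖u t‖ := by
    rw [ht, norm_mul, norm_zpow]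
  have hpow : (0:ℝ) ≤ ‖t‖ ^ d := by positivity
  constructor
  · rw [habst, mul_comm (‖u 0‖ / 2)]
    exact mul_le_mul_of_nonneg_left h1 hpow
  · rw [habst]
    calc ‖t‖ ^ d * ‖u t‖
        ≤ ‖t‖ ^ d * (‖u 0‖ + ‖u 0‖ / 2) :=
          mul_le_mul_of_nonneg_left h2 hpow
      _ = _ := by ring

lemma abs_log_le_five {z : ℂ} (hz : ‖z - 1‖ ≤ 1/2) :
    ‖Complex.log z‖ ≤ 5 := by
  have h1 : ‖z‖ ≤ 3/2 := by
    have := norm_add_le (z - 1) 1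
    simp only [sub_add_cancel, norm_one] at this
    linarith
  have h2 : (1:ℝ)/2 ≤ ‖z‖ := by
    have h := norm_add_le (1 - z) z
    have he : (1:ℂ) - z + z = 1 := by ring
    rw [he] at h
    have h3 : ‖1 - z‖ = ‖z - 1‖ := norm_sub_rev 1 z
    simp only [norm_one] at h
    rw [h3] at h
    linarith
  have hre : |(Complex.log z).re| ≤ 1 := by
    rw [Complex.log_re, abs_le]
    constructor
    · have hl : Real.log (1/2) ≤ Real.log (‖z‖) :=
        Real.log_le_log (by norm_num) h2
      have h4 : Real.log (1/2) = - Real.log 2 := by rw [one_div, Real.log_inv]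
      have h5 : Real.log 2 ≤ 1 := by
        have := Real.log_le_sub_one_of_pos (by norm_num : (0:ℝ) < 2)
        linarith
      linarith
    · have hl : Real.log (‖z‖) ≤ Real.log (3/2) :=
        Real.log_le_log (by linarith) h1
      have h5 := Real.log_le_sub_one_of_pos (by norm_num : (0:ℝ) < 3/2)
      linarith
  have him : |(Complex.log z).im| ≤ 4 := by
    rw [Complex.log_im]
    exact (Complex.abs_arg_le_pi z).trans Real.pi_le_four
  calc ‖Complex.log z‖ ≤ |(Complex.log z).re| + |(Complex.log z).im| :=
        Complex.norm_le_abs_re_add_abs_im _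
    _ ≤ 5 := by linarith

lemma mem_slit_of_close {z : ℂ} (h : ‖z - 1‖ < 1) : z ∈ Complex.slitPlane := by
  left
  have h1 : |(z - 1).re| ≤ ‖z - 1‖ := Complex.abs_re_le_norm _
  have h2 : (z - 1).re = z.re - 1 := by simp
  have := abs_le.1 h1
  simp only [h2] at this
  linarith [this.1]

lemma zpow_anti {x : ℝ} (hx : 0 < x) (hx1 : x ≤ 1) {i j : ℤ} (hij : i ≤ j) :
    x ^ j ≤ x ^ i := zpow_le_zpow_right_of_le_one₀ hx hx1 hij

lemma base_ge_one {x q : ℝ} {Γ : ℤ} (hx : 0 < x) (hq : 0 < q) (hq1 : q ≤ 1)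
    (hxq : x ≤ q ^ 2) (hΓ : 1 ≤ Γ) : 1 ≤ q * x ^ (-Γ) := by
  have hx1 : x ≤ 1 := hxq.trans (by nlinarith)
  have h1 : x ^ Γ ≤ x ^ (1:ℤ) := zpow_anti hx hx1 hΓ
  rw [zpow_one] at h1
  have h3 : x ^ Γ ≤ q := by nlinarith
  have h4 : 0 < x ^ Γ := zpow_pos hx Γ
  rw [zpow_neg x Γ]
  have h6 : x ^ Γ * (x ^ Γ)⁻¹ = 1 := mul_inv_cancel₀ h4.ne'
  nlinarith [mul_le_mul_of_nonneg_right h3 (inv_nonneg.2 h4.le)]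

lemma sq_expand {x : ℝ} (hx : x ≠ 0) {Γ : ℤ} (q : ℝ) :
    (q * x ^ (-Γ)) ^ 2 = q ^ 2 * x ^ (-(2*Γ)) := by
  rw [show -(2*Γ) = -Γ + -Γ by ring, zpow_add₀ hx, pow_two]; ring

lemma cube_expand {x : ℝ} (hx : x ≠ 0) {Γ : ℤ} (q : ℝ) :
    (q * x ^ (-Γ)) ^ 3 = q ^ 3 * x ^ (-(3*Γ)) := by
  rw [show -(3*Γ) = -Γ + -Γ + -Γ by ring, zpow_add₀ hx, zpow_add₀ hx,
    show (3:ℕ) = 2 + 1 by norm_num, pow_succ, pow_two]; ring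

lemma lemA {x q A r : ℝ} {e Γ : ℤ} (hx : 0 < x) (hq : 0 < q) (hq1 : q ≤ 1)
    (hxr : x ≤ r) (hr : r ≤ q ^ 2) (hAr : 3 * A ^ 2 * r ≤ 1/2)
    (hΓ : 2 + 2 * |e| ≤ Γ) :
    3 * A ^ 2 * x ^ (2*e) ≤ (q * x ^ (-Γ)) ^ 2 := by
  have hx1 : x ≤ 1 := by nlinarith
  have he1 : -e ≤ |e| := neg_le_abs e
  have he2 : e ≤ |e| := le_abs_self e
  have hexp : (2:ℤ) ≤ 2*e + 2*Γ := by omega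
  have h2 : x ^ (2*e + 2*Γ) ≤ x ^ (2:ℤ) := zpow_anti hx hx1 hexp
  have h3 : x ^ (2:ℤ) = x * x := by rw [zpow_two]
  rw [h3] at h2
  have h6 : 3*A^2*x^(2*e+2*Γ) ≤ 3*A^2*(x*x) :=
    mul_le_mul_of_nonneg_left h2 (by positivity)
  have hxx : 3*A^2*(x*x) ≤ q ^ 2 := by nlinarith
  have hkey : 3 * A ^ 2 * x ^ (2*e + 2*Γ) ≤ q ^ 2 := le_trans h6 hxx
  rw [sq_expand hx.ne' q]
  have hsplit : x ^ (2*e) = x ^ (2*e + 2*Γ) * x ^ (-(2*Γ)) := by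
    rw [← zpow_add₀ hx.ne']; ring_nf
  rw [hsplit, ← mul_assoc]
  exact mul_le_mul_of_nonneg_right hkey (by positivity)

lemma lemB {x q B r : ℝ} {e' Γ : ℤ} (hx : 0 < x) (hq : 0 < q) (hq1 : q ≤ 1)
    (hxr : x ≤ r) (hr : r ≤ q ^ 2) (hB : 0 ≤ B) (hBr : B * r ≤ 1/2)
    (hΓ : 2 + |e'| ≤ Γ) :
    B * x ^ e' ≤ 2 * (q * x ^ (-Γ)) ^ 3 := by
  have hx1 : x ≤ 1 := by nlinarith
  have he1 : -e' ≤ |e'| := neg_le_abs e'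
  have he2 : e' ≤ |e'| := le_abs_self e'
  have hexp : (3:ℤ) ≤ e' + 3*Γ := by omega
  have h2 : x ^ (e' + 3*Γ) ≤ x ^ (3:ℤ) := zpow_anti hx hx1 hexp
  have h3 : x ^ (3:ℤ) = x * x * x := by
    rw [show (3:ℤ) = 1+1+1 by norm_num, zpow_add₀ hx.ne', zpow_add₀ hx.ne', zpow_one]
  rw [h3] at h2
  have h6 : B * x^(e'+3*Γ) ≤ B*(x*x*x) := mul_le_mul_of_nonneg_left h2 hB
  have hxx : x*x ≤ q^2*q^2 := by nlinarith
  have hx3 : x*x*x ≤ r * (q^2*q^2) := by nlinarith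
  have hstep : B*(x*x*x) ≤ (B*r) * (q^2*q^2) := by
    calc B*(x*x*x) ≤ B*(r*(q^2*q^2)) := mul_le_mul_of_nonneg_left hx3 hB
    _ = (B*r)*(q^2*q^2) := by ring
  have hq43 : q^2*q^2 ≤ q^3 := by nlinarith [pow_pos hq 3]
  have hkey : B * x ^ (e' + 3*Γ) ≤ 2 * q ^ 3 := by nlinarith [pow_pos hq 3]
  rw [cube_expand hx.ne' q, ← mul_assoc]
  have hsplit : x ^ e' = x ^ (e' + 3*Γ) * x ^ (-(3*Γ)) := by
    rw [← zpow_add₀ hx.ne']; ring_nf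
  rw [hsplit, ← mul_assoc]
  exact mul_le_mul_of_nonneg_right hkey (by positivity)

set_option maxHeartbeats 1000000 in
theorem stmt12 (r₀ : ℝ) (hr₀ : 0 < r₀) (a b : ℂ → ℂ)
    (ha : DifferentiableOn ℂ a (ball 0 r₀ \ {0}))
    (hb : DifferentiableOn ℂ b (ball 0 r₀ \ {0}))
    (hamero : MeroAtZero a) (hbmero : MeroAtZero b)
    (c : ℕ → ℂ → ℂ) (hc0 : ∀ t, c 0 t = a t)
    (hcrec : ∀ n t, c (n + 1) t = (c n t) ^ 3 - 3 * (a t) ^ 2 * (c n t) + b t)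
    (γ : ℕ → ℤ) (hγ : ∀ n, HasOrdAtZero (c n) (-(γ n)))
    (hγtop : Tendsto γ atTop atTop)
    (G : ℂ → ℂ → ℝ)
    (hG : ∀ x y : ℂ, Tendsto
      (fun m : ℕ => ((3 : ℝ) ^ m)⁻¹ * max (Real.log (‖(fab x y)^[m] x‖)) 0)
      atTop (nhds (G x y))) :
    ∃ N : ℕ, ∀ n, N ≤ n → ∃ r : ℝ, 0 < r ∧ r ≤ r₀ ∧ ∃ h : ℂ → ℂ,
      DifferentiableOn ℂ h (ball 0 r) ∧ (∀ t ∈ ball (0 : ℂ) r, h t ≠ 0) ∧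
      ∀ t : ℂ, 0 < ‖t‖ → ‖t‖ < r →
        G (a t) (b t) + ((γ n : ℝ) / 3 ^ n) * Real.log (‖t‖) =
          Real.log (‖h t‖) := by
  classical
  -- differentiability of the c m
  have hcdiff : ∀ m, DifferentiableOn ℂ (c m) (ball 0 r₀ \ {0}) := by
    intro m
    induction m with
    | zero => have : c 0 = a := funext hc0; rw [this]; exact ha
    | succ m ih =>
      have : c (m+1) = fun t => (c m t) ^ 3 - 3 * (a t) ^ 2 * (c m t) + b t :=
        funext (hcrec m)
      rw [this]
      exact (((ih.pow 3).sub (((differentiableOn_const 3).mul (ha.pow 2)).mul ih)).add hb)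
  -- c m is the iterate
  have hiter : ∀ t m, (fab (a t) (b t))^[m] (a t) = c m t := by
    intro t m
    induction m with
    | zero => simp [hc0]
    | succ m ih =>
      rw [Function.iterate_succ_apply', ih, fab, hcrec]
  -- order of a
  have haOrd : HasOrdAtZero a (-(γ 0)) := by
    have h := hγ 0
    have hca : c 0 = a := funext hc0
    rwa [hca] at h
  obtain ⟨e, he_def⟩ : ∃ e : ℤ, e = -(γ 0) := ⟨_, rfl⟩
  obtain ⟨A₁, A, hA₁, hA0, haev⟩ := haOrd.bounds
  rw [← he_def] at haev
  -- bound for b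
  obtain ⟨e', B, hB0, hbev⟩ :
      ∃ e' : ℤ, ∃ B : ℝ, 0 ≤ B ∧ ∀ᶠ t in nhdsWithin (0:ℂ) {0}ᶜ,
        ‖b t‖ ≤ B * ‖t‖ ^ e' := by
    rcases hbmero with ⟨d, hbord⟩ | hbz
    · obtain ⟨B₁, B₂, _, hB₂, hbev⟩ := hbord.bounds
      exact ⟨d, B₂, hB₂.le, hbev.mono fun t ht => ht.2⟩
    · refine ⟨0, 0, le_rfl, hbz.mono fun t ht => by simp [ht]⟩
  -- choose N
  obtain ⟨N, hNK⟩ := (hγtop.eventually_ge_atTop (2 + 2*|e| + |e'|)).exists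
  obtain ⟨Γ, hΓdef⟩ : ∃ Γ : ℤ, Γ = γ N := ⟨_, rfl⟩
  rw [← hΓdef] at hNK
  have hΓe : 2 + 2*|e| ≤ Γ := by have := abs_nonneg e'; omega
  have hΓe' : 2 + |e'| ≤ Γ := by have := abs_nonneg e; omega
  have hΓ1 : 1 ≤ Γ := by have := abs_nonneg e; have := abs_nonneg e'; omega
  have hΓ0 : 0 ≤ Γ := by omega
  -- bounds for c N
  obtain ⟨c₀, C₀, hc₀, hC₀, hcNev⟩ := (hγ N).bounds
  rw [show -(γ N) = -Γ by rw [hΓdef]] at hcNev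
  -- collect the eventual bounds into a radius δ
  obtain ⟨δ, hδ, hbnds⟩ := ev_punct_iff.1 (haev.and (hbev.and hcNev))
  -- choose constants
  obtain ⟨q, hq_def⟩ : ∃ q : ℝ, q = min (c₀/2) 1 := ⟨_, rfl⟩
  have hq : 0 < q := by rw [hq_def]; apply lt_min; positivity; norm_num
  have hq1 : q ≤ 1 := by rw [hq_def]; exact min_le_right _ _
  have h2q : 2*q ≤ c₀ := by
    have h := min_le_left (c₀/2) 1
    rw [← hq_def] at h
    linarith
  obtain ⟨E, hE_def⟩ : ∃ E : ℝ, E = 3 * A ^ 2 + B + 1 := ⟨_, rfl⟩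
  have hE : 0 < E := by rw [hE_def]; positivity
  obtain ⟨r, hr_def⟩ : ∃ r : ℝ, r = min (min δ r₀) (min (q^2) (1/(2*E))) := ⟨_, rfl⟩
  have hr0 : 0 < r := by
    rw [hr_def]
    exact lt_min (lt_min hδ hr₀) (lt_min (by positivity) (by positivity))
  have hrδ : r ≤ δ := by rw [hr_def]; exact le_trans (min_le_left _ _) (min_le_left _ _)
  have hrr₀ : r ≤ r₀ := by rw [hr_def]; exact le_trans (min_le_left _ _) (min_le_right _ _)
  have hrq : r ≤ q^2 := by rw [hr_def]; exact le_trans (min_le_right _ _) (min_le_left _ _)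
  have hrE : r ≤ 1/(2*E) := by rw [hr_def]; exact le_trans (min_le_right _ _) (min_le_right _ _)
  have hr1 : r ≤ 1 := hrq.trans (by nlinarith)
  have hEr : E * r ≤ 1/2 := by
    have h1 := mul_le_mul_of_nonneg_left hrE hE.le
    have h2 : E * (1/(2*E)) = 1/2 := by field_simp
    linarith
  rw [hE_def] at hEr
  have hAr : 3 * A^2 * r ≤ 1/2 := by nlinarith [hr0.le, hB0]
  have hBr : B * r ≤ 1/2 := by nlinarith [hr0.le, sq_nonneg A]
  -- the step estimate
  have hstep : ∀ j, ∀ t : ℂ, 0 < ‖t‖ → ‖t‖ < r →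
      2 * (q * ‖t‖ ^ (-Γ)) ^ (3^j) ≤ ‖c (N+j) t‖ →
      ‖c (N+j+1) t - (c (N+j) t)^3‖ ≤ 1/2 * ‖c (N+j) t‖^3 := by
    intro j t h0 hltr hlb
    set x := ‖t‖ with hx_def
    set β := q * x ^ (-Γ) with hβ_def
    have hβ1 : 1 ≤ β := base_ge_one h0 hq hq1 (le_trans hltr.le hrq) hΓ1
    have hβ0 : 0 < β := lt_of_lt_of_le one_pos hβ1
    obtain ⟨⟨hatl, hat⟩, hbt, hcNt⟩ := hbnds t h0 (lt_of_lt_of_le hltr hrδ)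
    -- rewrite the difference
    have hdiff : c (N+j+1) t - (c (N+j) t)^3 = b t - 3*(a t)^2*(c (N+j) t) := by
      rw [hcrec]; ring
    have htri : ‖c (N+j+1) t - (c (N+j) t)^3‖ ≤
        ‖b t‖ + 3 * ‖a t‖^2 * ‖c (N+j) t‖ := by
      rw [hdiff]
      calc ‖b t - 3*(a t)^2*(c (N+j) t)‖ ≤
          ‖b t‖ + ‖3*(a t)^2*(c (N+j) t)‖ := by
            have := norm_add_le (b t) (-(3*(a t)^2*(c (N+j) t)))
            simpa [sub_eq_add_neg] using this
        _ = ‖b t‖ + 3 * ‖a t‖^2 * ‖c (N+j) t‖ := by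
            rw [norm_mul, norm_mul, norm_pow, Complex.norm_ofNat]
    -- |a t|^2 ≤ A^2 x^(2e)
    have hA2 : 3 * ‖a t‖^2 ≤ 3 * A^2 * x^(2*e) := by
      have h1 : ‖a t‖^2 ≤ (A * x^e)^2 :=
        pow_le_pow_left₀ (norm_nonneg _) hat 2
      have h2 : (A * x^e)^2 = A^2 * x^(2*e) := by
        rw [show (2:ℤ)*e = e + e by ring, zpow_add₀ h0.ne']; ring
      have h3 : ‖a t‖^2 ≤ A^2 * x^(2*e) := h2 ▸ h1
      linarith
    have hcabs : 0 ≤ ‖c (N+j) t‖ := norm_nonneg _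
    have hone : 1 ≤ 3^j := Nat.one_le_pow _ _ (by norm_num)
    -- β^2 ≤ β^(2*3^j), etc.
    have hβsq : β^2 ≤ (β^(3^j))^2 := by
      calc β^2 ≤ β^(3^j*2) := pow_le_pow_right₀ hβ1 (Nat.mul_le_mul_right 2 hone)
        _ = (β^(3^j))^2 := pow_mul β _ 2
    have hβcube : β^3 ≤ (β^(3^j))^3 := by
      calc β^3 ≤ β^(3^j*3) := pow_le_pow_right₀ hβ1 (Nat.mul_le_mul_right 3 hone)
        _ = (β^(3^j))^3 := pow_mul β _ 3
    -- first piece : 3|a|^2 |c| ≤ 1/4 |c|^3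
    have hpiece1 : 3 * ‖a t‖^2 * ‖c (N+j) t‖ ≤
        1/4 * ‖c (N+j) t‖^3 := by
      have hlemA := lemA (q := q) (A := A) (r := r) (e := e) (Γ := Γ)
        h0 hq hq1 hltr.le hrq hAr hΓe
      rw [← hβ_def] at hlemA
      have h4 : (2*(β^(3^j)))^2 ≤ ‖c (N+j) t‖^2 :=
        pow_le_pow_left₀ (by positivity) hlb 2
      have h4' : (2*(β^(3^j)))^2 = 4 * (β^(3^j))^2 := by ring
      have h5 : 3 * ‖a t‖^2 ≤ ‖c (N+j) t‖^2 / 4 := by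
        linarith
      have h6 := mul_le_mul_of_nonneg_right h5 hcabs
      have h7 : ‖c (N+j) t‖^2/4 * ‖c (N+j) t‖
          = 1/4 * ‖c (N+j) t‖^3 := by ring
      linarith
    -- second piece : |b| ≤ 1/4 |c|^3
    have hpiece2 : ‖b t‖ ≤ 1/4 * ‖c (N+j) t‖^3 := by
      have hlemB := lemB (q := q) (B := B) (r := r) (e' := e') (Γ := Γ)
        h0 hq hq1 hltr.le hrq hB0 hBr hΓe'
      rw [← hβ_def] at hlemB
      have h4 : (2*(β^(3^j)))^3 ≤ ‖c (N+j) t‖^3 :=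
        pow_le_pow_left₀ (by positivity) hlb 3
      have h5 : (2*(β^(3^j)))^3 = 8 * (β^(3^j))^3 := by ring
      linarith
    linarith
  -- the lower bound, by induction
  have hlow : ∀ j, ∀ t : ℂ, 0 < ‖t‖ → ‖t‖ < r →
      2 * (q * ‖t‖ ^ (-Γ)) ^ (3^j) ≤ ‖c (N+j) t‖ := by
    intro j
    induction j with
    | zero =>
      intro t h0 hltr
      obtain ⟨⟨hatl, hat⟩, hbt, hcNt⟩ := hbnds t h0 (lt_of_lt_of_le hltr hrδ)
      have hxp : (0:ℝ) < ‖t‖ ^ (-Γ) := zpow_pos h0 _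
      have hmul := mul_le_mul_of_nonneg_right h2q hxp.le
      calc 2 * (q * ‖t‖ ^ (-Γ)) ^ (3^0) = 2*q * ‖t‖ ^ (-Γ) := by
            norm_num [mul_assoc]
        _ ≤ c₀ * ‖t‖ ^ (-Γ) := hmul
        _ ≤ ‖c (N+0) t‖ := hcNt.1
    | succ j ih =>
      intro t h0 hltr
      have hlb := ih t h0 hltr
      have hs := hstep j t h0 hltr hlb
      set β := q * ‖t‖ ^ (-Γ) with hβ_def
      have hβ1 : 1 ≤ β := base_ge_one h0 hq hq1 (le_trans hltr.le hrq) hΓ1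
      have htri : ‖(c (N+j) t)^3‖ ≤ ‖c (N+j+1) t‖ +
          ‖c (N+j+1) t - (c (N+j) t)^3‖ := by
        have h := norm_add_le (c (N+j+1) t) ((c (N+j) t)^3 - c (N+j+1) t)
        have he2 : c (N+j+1) t + ((c (N+j) t)^3 - c (N+j+1) t) = (c (N+j) t)^3 := by ring
        rw [he2] at h
        have h3 : ‖(c (N+j) t)^3 - c (N+j+1) t‖
            = ‖c (N+j+1) t - (c (N+j) t)^3‖ := norm_sub_rev _ _
        rw [h3] at h
        exact h
    -- |c_{j+1}| ≥ |c_j|^3/2 ≥ 4 β^{3^{j+1}} ≥ 2 β^{3^{j+1}}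
      have hcube : ‖(c (N+j) t)^3‖ = ‖c (N+j) t‖^3 := norm_pow _ _
      have h8 : (2*(β^(3^j)))^3 ≤ ‖c (N+j) t‖^3 :=
        pow_le_pow_left₀ (by positivity) hlb 3
      have hplus : 1/2 * ‖c (N+j) t‖^3 ≤ ‖c (N+(j+1)) t‖ := by
        have : (N + (j+1)) = (N + j + 1) := by omega
        rw [this]
        rw [hcube] at htri
        linarith
      have hpow : (2*(β^(3^j)))^3 = 8 * β^(3^(j+1)) := by
        rw [mul_pow, ← pow_mul]
        rw [show 3^j*3 = 3^(j+1) by rw [pow_succ]]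
        norm_num
      have hβpos : 0 < β^(3^(j+1)) := pow_pos (lt_of_lt_of_le one_pos hβ1) _
      nlinarith
  -- membership translation
  have hsub : ball (0:ℂ) r \ {0} ⊆ ball 0 r₀ \ {0} :=
    Set.diff_subset_diff_left (ball_subset_ball hrr₀)
  have hmem : ∀ {t : ℂ}, t ∈ ball (0:ℂ) r \ {0} ↔ (0 < ‖t‖ ∧ ‖t‖ < r) := by
    intro t
    constructor
    · rintro ⟨h1, h2⟩
      refine ⟨norm_pos_iff.2 (by simpa using h2), ?_⟩
      simpa using mem_ball_zero_iff.1 h1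
    · rintro ⟨h1, h2⟩
      refine ⟨mem_ball_zero_iff.2 (by simpa using h2), ?_⟩
      simpa using (norm_pos_iff.1 h1)
  have h0mem : (0:ℂ) ∈ ball (0:ℂ) r := mem_ball_self hr0
  have hballnhds : ball (0:ℂ) r ∈ nhds (0:ℂ) := isOpen_ball.mem_nhds h0mem
  have hevr : ∀ᶠ s in nhdsWithin (0:ℂ) {0}ᶜ, 0 < ‖s‖ ∧ ‖s‖ < r :=
    ev_punct_iff.2 ⟨r, hr0, fun s h1 h2 => ⟨h1, h2⟩⟩
  -- |c (N+j) t| ≥ 2 and nonvanishing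
  have hc2 : ∀ j, ∀ t : ℂ, 0 < ‖t‖ → ‖t‖ < r →
      2 ≤ ‖c (N+j) t‖ := by
    intro j t h0 hltr
    have h1 := hlow j t h0 hltr
    have hβ1 : 1 ≤ q * ‖t‖ ^ (-Γ) :=
      base_ge_one h0 hq hq1 (le_trans hltr.le hrq) hΓ1
    have h2 : (1:ℝ) ≤ (q * ‖t‖ ^ (-Γ))^(3^j) := one_le_pow₀ hβ1
    linarith
  have hcne : ∀ j, ∀ t : ℂ, 0 < ‖t‖ → ‖t‖ < r → c (N+j) t ≠ 0 := by
    intro j t h0 hltr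
    have := hc2 j t h0 hltr
    intro hzero
    rw [hzero] at this
    simp at this
    linarith
  -- the ratio functions w j
  obtain ⟨w, hw_def⟩ : ∃ w : ℕ → ℂ → ℂ, w = fun j t => c (N+j+1) t / (c (N+j) t)^3 :=
    ⟨_, rfl⟩
  have hwval : ∀ j, ∀ t : ℂ, 0 < ‖t‖ → ‖t‖ < r →
      (c (N+j) t)^3 * w j t = c (N+j+1) t := by
    intro j t h0 hltr
    rw [hw_def]
    rw [mul_comm]
    exact div_mul_cancel₀ _ (pow_ne_zero 3 (hcne j t h0 hltr))
  have hwbd : ∀ j, ∀ t : ℂ, 0 < ‖t‖ → ‖t‖ < r →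
      ‖w j t - 1‖ ≤ 1/2 := by
    intro j t h0 hltr
    have hcn := hcne j t h0 hltr
    have h1 : w j t - 1 = (c (N+j+1) t - (c (N+j) t)^3) / (c (N+j) t)^3 := by
      rw [hw_def]
      field_simp
    rw [h1, norm_div, norm_pow]
    have hcpos : (0:ℝ) < ‖c (N+j) t‖ := norm_pos_iff.mpr hcn
    rw [div_le_iff₀ (by positivity : (0:ℝ) < ‖c (N+j) t‖^3)]
    have := hstep j t h0 hltr (hlow j t h0 hltr)
    linarith
  have hwub : ∀ j, ∀ t : ℂ, 0 < ‖t‖ → ‖t‖ < r →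
      ‖w j t‖ ≤ 3/2 := by
    intro j t h0 hltr
    have h1 := hwbd j t h0 hltr
    have htr := norm_add_le (w j t - 1) 1
    simp only [sub_add_cancel, norm_one] at htr
    linarith
  -- the extended functions W j
  obtain ⟨W, hW_def⟩ : ∃ W : ℕ → ℂ → ℂ,
      W = fun j => Function.update (w j) 0 (limUnder (nhdsWithin (0:ℂ) {0}ᶜ) (w j)) :=
    ⟨_, rfl⟩
  have hWeq : ∀ j, ∀ t : ℂ, t ≠ 0 → W j t = w j t := by
    intro j t ht
    rw [hW_def]
    exact Function.update_of_ne ht _ _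
  have hwdiff : ∀ j, DifferentiableOn ℂ (w j) (ball (0:ℂ) r \ {0}) := by
    intro j
    rw [hw_def]
    apply DifferentiableOn.div ((hcdiff _).mono hsub) (((hcdiff _).mono hsub).pow 3)
    intro z hz
    exact pow_ne_zero 3 (hcne j z (hmem.1 hz).1 (hmem.1 hz).2)
  have hWdiff : ∀ j, DifferentiableOn ℂ (W j) (ball (0:ℂ) r) := by
    intro j
    rw [hW_def]
    apply Complex.differentiableOn_update_limUnder_of_bddAbove hballnhds (hwdiff j)
    refine ⟨3/2, mem_upperBounds.2 ?_⟩
    rintro y ⟨z, hz, rfl⟩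
    obtain ⟨h0, hltr⟩ := hmem.1 hz
    simpa using hwub j z h0 hltr
  have hWbd : ∀ j, ∀ t ∈ ball (0:ℂ) r, ‖W j t - 1‖ ≤ 1/2 := by
    intro j t htm
    rcases eq_or_ne t 0 with rfl | hne
    · have hcont : ContinuousAt (W j) 0 :=
        ((hWdiff j).differentiableAt hballnhds).continuousAt
      have htend : Tendsto (fun s => ‖W j s - 1‖) (nhdsWithin (0:ℂ) {0}ᶜ)
          (nhds (‖W j 0 - 1‖)) :=
        (continuous_norm.continuousAt.comp
          (hcont.sub continuousAt_const)).tendsto.mono_left nhdsWithin_le_nhds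
      apply le_of_tendsto htend
      filter_upwards [hevr, self_mem_nhdsWithin] with s hs hs0
      rw [hWeq j s (by simpa using hs0)]
      exact hwbd j s hs.1 hs.2
    · rw [hWeq j t hne]
      have hmm := hmem.1 ⟨htm, by simpa using hne⟩
      exact hwbd j t hmm.1 hmm.2
  have hWne : ∀ j, ∀ t ∈ ball (0:ℂ) r, W j t ≠ 0 := by
    intro j t htm hzero
    have := hWbd j t htm
    rw [hzero] at this
    simp at this
    linarith
  -- the function v
  obtain ⟨v, hv_def⟩ : ∃ v : ℂ → ℂ, v = fun t => t ^ (Γ.toNat) * c N t := ⟨_, rfl⟩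
  have hvbnd : ∀ t : ℂ, 0 < ‖t‖ → ‖t‖ < r →
      c₀ ≤ ‖v t‖ ∧ ‖v t‖ ≤ C₀ := by
    intro t h0 hltr
    obtain ⟨-, -, hcNt⟩ := hbnds t h0 (lt_of_lt_of_le hltr hrδ)
    have habs : ‖v t‖ = ‖t‖ ^ (Γ:ℤ) * ‖c N t‖ := by
      rw [hv_def]
      simp only [norm_mul, norm_pow]
      rw [← zpow_natCast (‖t‖), Int.toNat_of_nonneg hΓ0]
    have hzp : (0:ℝ) < ‖t‖ ^ (Γ:ℤ) := zpow_pos h0 _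
    have hcancel : ‖t‖ ^ (Γ:ℤ) * ‖t‖ ^ (-Γ) = 1 := by
      rw [← zpow_add₀ h0.ne']
      simp
    constructor
    · have h1 := mul_le_mul_of_nonneg_left hcNt.1 hzp.le
      have h2 : ‖t‖ ^ (Γ:ℤ) * (c₀ * ‖t‖ ^ (-Γ)) = c₀ := by
        rw [mul_comm c₀, ← mul_assoc, hcancel, one_mul]
      rw [h2] at h1
      rw [habs]
      exact h1
    · have h1 := mul_le_mul_of_nonneg_left hcNt.2 hzp.le
      have h2 : ‖t‖ ^ (Γ:ℤ) * (C₀ * ‖t‖ ^ (-Γ)) = C₀ := by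
        rw [mul_comm C₀, ← mul_assoc, hcancel, one_mul]
      rw [h2] at h1
      rw [habs]
      exact h1
  obtain ⟨V, hV_def⟩ : ∃ V : ℂ → ℂ,
      V = Function.update v 0 (limUnder (nhdsWithin (0:ℂ) {0}ᶜ) v) := ⟨_, rfl⟩
  have hVeq : ∀ t : ℂ, t ≠ 0 → V t = v t := by
    intro t ht
    rw [hV_def]
    exact Function.update_of_ne ht _ _
  have hvdiff : DifferentiableOn ℂ v (ball (0:ℂ) r \ {0}) := by
    rw [hv_def]
    exact (differentiableOn_pow _).mul ((hcdiff N).mono hsub)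
  have hVdiff : DifferentiableOn ℂ V (ball (0:ℂ) r) := by
    rw [hV_def]
    apply Complex.differentiableOn_update_limUnder_of_bddAbove hballnhds hvdiff
    refine ⟨C₀, mem_upperBounds.2 ?_⟩
    rintro y ⟨z, hz, rfl⟩
    obtain ⟨h0, hltr⟩ := hmem.1 hz
    simpa using (hvbnd z h0 hltr).2
  have hVlb : ∀ t ∈ ball (0:ℂ) r, c₀ ≤ ‖V t‖ := by
    intro t htm
    rcases eq_or_ne t 0 with rfl | hne
    · have hcont : ContinuousAt V 0 := (hVdiff.differentiableAt hballnhds).continuousAt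
      have htend : Tendsto (fun s => ‖V s‖) (nhdsWithin (0:ℂ) {0}ᶜ)
          (nhds (‖V 0‖)) :=
        (continuous_norm.continuousAt.comp hcont).tendsto.mono_left nhdsWithin_le_nhds
      apply ge_of_tendsto htend
      filter_upwards [hevr, self_mem_nhdsWithin] with s hs hs0
      rw [hVeq s (by simpa using hs0)]
      exact (hvbnd s hs.1 hs.2).1
    · rw [hVeq t hne]
      have hmm := hmem.1 ⟨htm, by simpa using hne⟩
      exact (hvbnd t hmm.1 hmm.2).1
  have hVne : ∀ t ∈ ball (0:ℂ) r, V t ≠ 0 := by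
    intro t htm hzero
    have := hVlb t htm
    rw [hzero] at this
    simp at this
    linarith
  have hV0 : V 0 ≠ 0 := hVne 0 h0mem
  -- shrink the radius so that V t / V 0 stays close to 1
  have hVev : ∀ᶠ s in nhds (0:ℂ), ‖V s - V 0‖ < c₀ := by
    have hcont : ContinuousAt V 0 := (hVdiff.differentiableAt hballnhds).continuousAt
    have hc : ContinuousAt (fun s => ‖V s - V 0‖) 0 :=
      continuous_norm.continuousAt.comp (hcont.sub continuousAt_const)
    have h2 := hc.eventually_lt (continuousAt_const (y := c₀)) (by simpa using hc₀)
    simpa using h2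
  obtain ⟨ε, hε, hVclose⟩ := Metric.eventually_nhds_iff.1 hVev
  obtain ⟨r', hr'_def⟩ : ∃ r' : ℝ, r' = min r ε := ⟨_, rfl⟩
  have hr'0 : 0 < r' := by rw [hr'_def]; exact lt_min hr0 hε
  have hr'r : r' ≤ r := by rw [hr'_def]; exact min_le_left _ _
  have hr'ε : r' ≤ ε := by rw [hr'_def]; exact min_le_right _ _
  have hVrat : ∀ t ∈ ball (0:ℂ) r', ‖V t / V 0 - 1‖ < 1 := by
    intro t htm
    have h1 : ‖t‖ < r' := by
      simpa using mem_ball_zero_iff.1 htm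
    have h2 : ‖V t - V 0‖ < c₀ := by
      apply hVclose
      simp only [Complex.dist_eq, sub_zero]
      exact lt_of_lt_of_le h1 hr'ε
    have h3 : V t / V 0 - 1 = (V t - V 0) / V 0 := by
      field_simp
    rw [h3, norm_div]
    have h4 : c₀ ≤ ‖V 0‖ := hVlb 0 h0mem
    have h5 : (0:ℝ) < ‖V 0‖ := lt_of_lt_of_le hc₀ h4
    rw [div_lt_iff₀ h5]
    nlinarith
  -- coefficients of the series
  obtain ⟨co, hco_def⟩ : ∃ co : ℕ → ℝ, co = fun j => ((3:ℝ)^(N+j+1))⁻¹ := ⟨_, rfl⟩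
  have hco_pos : ∀ j, 0 < co j := by intro j; rw [hco_def]; positivity
  have hco_sum : Summable (fun j => 5 * co j) := by
    rw [hco_def]
    have h1 : (fun j : ℕ => 5 * ((3:ℝ)^(N+j+1))⁻¹)
        = fun j => (5 * ((3:ℝ)^(N+1))⁻¹) * ((3:ℝ)⁻¹)^j := by
      funext j
      have h2 : (3:ℝ)^(N+j+1) = 3^(N+1) * 3^j := by
        rw [← pow_add]
        congr 1
        omega
      rw [h2, mul_inv, inv_pow]
      ring
    rw [h1]
    exact (summable_geometric_of_lt_one (by norm_num) (by norm_num)).mul_left _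
  have hterm_bd : ∀ j, ∀ t ∈ ball (0:ℂ) r, ‖(↑(co j) : ℂ) * Complex.log (W j t)‖ ≤ 5 * co j := by
    intro j t htm
    rw [norm_mul]
    have h1 : ‖((co j : ℝ) : ℂ)‖ = co j := by
      rw [Complex.norm_real, Real.norm_eq_abs, abs_of_pos (hco_pos j)]
    rw [h1]
    have h2 := abs_log_le_five (hWbd j t htm)
    calc co j * ‖Complex.log (W j t)‖ ≤ co j * 5 :=
          mul_le_mul_of_nonneg_left h2 (hco_pos j).le
      _ = 5 * co j := by ring
  -- the holomorphic logarithm g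
  obtain ⟨g, hg_def⟩ : ∃ g : ℂ → ℂ, g = fun t =>
      (↑(((3:ℝ)^N)⁻¹) : ℂ) * (Complex.log (V 0) + Complex.log (V t / V 0)) +
      ∑' j : ℕ, (↑(co j) : ℂ) * Complex.log (W j t) := ⟨_, rfl⟩
  have hWslit : ∀ j, ∀ t ∈ ball (0:ℂ) r, W j t ∈ Complex.slitPlane := by
    intro j t htm
    exact mem_slit_of_close (lt_of_le_of_lt (hWbd j t htm) one_half_lt_one)
  have hballsub : ball (0:ℂ) r' ⊆ ball 0 r := ball_subset_ball hr'r
  have hgdiff : DifferentiableOn ℂ g (ball (0:ℂ) r') := by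
    rw [hg_def]
    apply DifferentiableOn.add
    · apply (differentiableOn_const _).mul
      apply (differentiableOn_const _).add
      apply DifferentiableOn.clog
      · exact (hVdiff.mono hballsub).div_const _
      · intro x hx
        exact mem_slit_of_close (hVrat x hx)
    · exact Complex.differentiableOn_tsum_of_summable_norm hco_sum
        (fun j => (differentiableOn_const _).mul (((hWdiff j).mono hballsub).clog
          (fun x hx => hWslit j x (hballsub hx)))) isOpen_ball
        (fun j x hx => hterm_bd j x (hballsub hx))
  -- recursion for the orders
  have hγrec : ∀ j, γ (N+j+1) = 3 * γ (N+j) := by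
    intro j
    obtain ⟨u, hu, hu0, huev⟩ := hγ (N+j)
    have hWanal : AnalyticAt ℂ (W j) 0 := (hWdiff j).analyticAt hballnhds
    have hord2 : HasOrdAtZero (c (N+j+1)) (-(3 * γ (N+j))) := by
      refine ⟨fun s => (u s)^3 * W j s, (hu.pow 3).mul hWanal, ?_, ?_⟩
      · exact mul_ne_zero (pow_ne_zero 3 hu0) (hWne j 0 h0mem)
      · filter_upwards [huev, hevr, self_mem_nhdsWithin] with s hs hsr hs0
        have hsne : s ≠ 0 := by simpa using hs0
        have h1 : c (N+j+1) s = (c (N+j) s)^3 * W j s := by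
          rw [hWeq j s hsne]
          exact (hwval j s hsr.1 hsr.2).symm
        rw [h1, hs, mul_pow, ← zpow_natCast (s ^ (-γ (N+j))) 3, ← zpow_mul,
          show -γ (N+j) * ((3:ℕ):ℤ) = -(3*γ (N+j)) by push_cast; ring]
        ring
    have huniq := (hγ (N+j+1)).unique hord2
    omega
  have hγpow : ∀ j, γ (N+j) = 3^j * Γ := by
    intro j
    induction j with
    | zero => simpa using hΓdef.symm
    | succ j ih =>
      rw [show N+(j+1) = N+j+1 from rfl, hγrec j, ih, pow_succ]
      ring
  have hcoef : ∀ n, N ≤ n → (γ n : ℝ)/3^n = (Γ:ℝ)/3^N := by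
    intro n hn
    obtain ⟨j, rfl⟩ : ∃ j, n = N + j := ⟨n - N, by omega⟩
    rw [hγpow j]
    have h3n : (3:ℝ)^(N+j) = 3^N * 3^j := pow_add 3 N j
    push_cast
    rw [h3n]
    have hp1 : (0:ℝ) < (3:ℝ)^N := by positivity
    have hp2 : (0:ℝ) < (3:ℝ)^j := by positivity
    field_simp
  -- conclusion
  refine ⟨N, fun n hn => ⟨r', hr'0, le_trans hr'r hrr₀, fun t => Complex.exp (g t),
    hgdiff.cexp, fun t _ => Complex.exp_ne_zero _, ?_⟩⟩
  intro t h0 hltr'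
  have hltr : ‖t‖ < r := lt_of_lt_of_le hltr' hr'r
  have htne : t ≠ 0 := norm_pos_iff.1 h0
  have htball : t ∈ ball (0:ℂ) r :=
    mem_ball_zero_iff.2 (by simpa using hltr)
  have htball' : t ∈ ball (0:ℂ) r' :=
    mem_ball_zero_iff.2 (by simpa using hltr')
  have hRHS : Real.log (‖Complex.exp (g t)‖) = (g t).re := by
    rw [Complex.norm_exp, Real.log_exp]
  have hsumC : Summable (fun j => (↑(co j) : ℂ) * Complex.log (W j t)) :=
    Summable.of_norm_bounded hco_sum (fun j => hterm_bd j t htball)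
  have hVtne : ‖V t‖ ≠ 0 := by
    have := hVlb t htball
    linarith
  have hV0ne : ‖V 0‖ ≠ 0 := by
    have := hVlb 0 h0mem
    linarith
  have hreg : (g t).re = ((3:ℝ)^N)⁻¹ * Real.log (‖V t‖) +
      ∑' j, co j * Real.log (‖W j t‖) := by
    rw [hg_def]
    simp only [Complex.add_re]
    rw [Complex.re_tsum hsumC]
    congr 1
    · rw [Complex.re_ofReal_mul, Complex.add_re, Complex.log_re, Complex.log_re]
      rw [norm_div, Real.log_div hVtne hV0ne]
      ring
    · exact tsum_congr fun j => by rw [Complex.re_ofReal_mul, Complex.log_re]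
  have hsumR : Summable (fun j => co j * Real.log (‖W j t‖)) := by
    apply Summable.of_norm_bounded hco_sum
    intro j
    rw [Real.norm_eq_abs, abs_mul, abs_of_pos (hco_pos j)]
    have h2 : |Real.log (‖W j t‖)| ≤ 5 := by
      have h3 := abs_log_le_five (hWbd j t htball)
      have hre : |Real.log (‖W j t‖)| = |(Complex.log (W j t)).re| := by
        rw [Complex.log_re]
      rw [hre]
      exact le_trans (Complex.abs_re_le_norm _) h3
    calc co j * |Real.log (‖W j t‖)| ≤ co j * 5 :=
          mul_le_mul_of_nonneg_left h2 (hco_pos j).le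
      _ = 5 * co j := by ring
  have hcN0 : c N t ≠ 0 := by
    have h := hcne 0 t h0 hltr
    simpa using h
  have hlogV : Real.log (‖V t‖) =
      (Γ:ℝ) * Real.log (‖t‖) + Real.log (‖c N t‖) := by
    rw [hVeq t htne, hv_def]
    simp only [norm_mul, norm_pow]
    rw [Real.log_mul (by positivity) (norm_ne_zero_iff.mpr hcN0), Real.log_pow]
    have hcast : ((Γ.toNat : ℕ) : ℝ) = (Γ:ℝ) := by
      exact_mod_cast congrArg (fun z : ℤ => (z:ℝ)) (Int.toNat_of_nonneg hΓ0)
    rw [hcast]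
  have hwne2 : ∀ j, (1:ℝ)/2 ≤ ‖w j t‖ := by
    intro j
    have h1 := hwbd j t h0 hltr
    have htr := norm_add_le (1 - w j t) (w j t)
    have he : (1:ℂ) - w j t + w j t = 1 := by ring
    rw [he, norm_one] at htr
    have h3 : ‖1 - w j t‖ = ‖w j t - 1‖ := norm_sub_rev _ _
    rw [h3] at htr
    linarith
  -- the telescoping identity for partial sums
  have hseq : ∀ j, ((3:ℝ)^(N+j))⁻¹ * Real.log (‖c (N+j) t‖) =
      ((3:ℝ)^N)⁻¹ * Real.log (‖c N t‖) +
      ∑ k ∈ Finset.range j, co k * Real.log (‖w k t‖) := by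
    intro j
    induction j with
    | zero => simp
    | succ j ih =>
      rw [show N + (j+1) = (N+j)+1 by omega]
      have hcj := hcne j t h0 hltr
      have hwj : w j t ≠ 0 := by
        intro hzero
        have h4 := hwne2 j
        rw [hzero] at h4
        simp at h4
        linarith
      have hcpos : (0:ℝ) < ‖c (N+j) t‖ := norm_pos_iff.mpr hcj
      have hlog : Real.log (‖c ((N+j)+1) t‖) =
          3 * Real.log (‖c (N+j) t‖) + Real.log (‖w j t‖) := by
        rw [← hwval j t h0 hltr, norm_mul, norm_pow,
          Real.log_mul (by positivity : (‖c (N+j) t‖)^3 ≠ 0)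
            (norm_ne_zero_iff.mpr hwj), Real.log_pow]
        push_cast
        ring
      have hpow : (3:ℝ)^((N+j)+1) = (3:ℝ)^(N+j) * 3 := pow_succ 3 (N+j)
      have hpos : (0:ℝ) < (3:ℝ)^(N+j) := by positivity
      have hco : co j = ((3:ℝ)^((N+j)+1))⁻¹ := by rw [hco_def]
      have hinv : ((3:ℝ)^((N+j)+1))⁻¹ * 3 = ((3:ℝ)^(N+j))⁻¹ := by
        rw [hpow, mul_inv, mul_assoc, inv_mul_cancel₀ (by norm_num : (3:ℝ) ≠ 0), mul_one]
      rw [hlog, Finset.sum_range_succ]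
      calc ((3:ℝ)^((N+j)+1))⁻¹ * (3 * Real.log (‖c (N+j) t‖) +
              Real.log (‖w j t‖))
          = (((3:ℝ)^((N+j)+1))⁻¹*3) * Real.log (‖c (N+j) t‖) +
            ((3:ℝ)^((N+j)+1))⁻¹ * Real.log (‖w j t‖) := by ring
        _ = ((3:ℝ)^(N+j))⁻¹ * Real.log (‖c (N+j) t‖) +
            co j * Real.log (‖w j t‖) := by rw [hinv, hco]
        _ = (((3:ℝ)^N)⁻¹ * Real.log (‖c N t‖) +
            ∑ k ∈ Finset.range j, co k * Real.log (‖w k t‖)) +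
            co j * Real.log (‖w j t‖) := by rw [ih]
        _ = _ := by ring
  have hmax : ∀ j, max (Real.log (‖c (N+j) t‖)) 0 =
      Real.log (‖c (N+j) t‖) := by
    intro j
    apply max_eq_left
    apply Real.log_nonneg
    linarith [hc2 j t h0 hltr]
  -- the limit value
  obtain ⟨L, hL_def⟩ : ∃ L : ℝ, L = ((3:ℝ)^N)⁻¹ * Real.log (‖c N t‖) +
      ∑' j, co j * Real.log (‖W j t‖) := ⟨_, rfl⟩
  have hLg : (g t).re = L + ((Γ:ℝ)/3^N) * Real.log (‖t‖) := by
    rw [hL_def, hreg, hlogV]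
    ring
  have hps : Tendsto (fun j => ∑ k ∈ Finset.range j, co k * Real.log (‖W k t‖))
      atTop (nhds (∑' j, co j * Real.log (‖W j t‖))) :=
    hsumR.hasSum.tendsto_sum_nat
  have hT1 : Tendsto (fun j => ((3:ℝ)^(N+j))⁻¹ *
      max (Real.log (‖c (N+j) t‖)) 0) atTop (nhds L) := by
    rw [hL_def]
    apply (tendsto_const_nhds.add hps).congr
    intro j
    rw [hmax j, hseq j]
    congr 1
    apply Finset.sum_congr rfl
    intro k _
    rw [hWeq k t htne]
  have hT2 : Tendsto (fun m => ((3:ℝ)^m)⁻¹ *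
      max (Real.log (‖c m t‖)) 0) atTop (nhds L) := by
    rw [← tendsto_add_atTop_iff_nat N]
    apply hT1.congr
    intro j
    rw [add_comm N j]
  have hGt := hG (a t) (b t)
  simp only [hiter t] at hGt
  have hGL : G (a t) (b t) = L := tendsto_nhds_unique hGt hT2
  rw [hGL, hcoef n hn, hRHS, hLg]
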